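/- Let G be an infinite group with a finite coloring, and let a_1, a_2, ... be distinct elements of G such that the set FP̂(a_1,a_2,...) of all products a_{i_1} a_{i_2} ⋯ a_{i_m} over finite sequences of distinct indices is almost-monochromatic. Then there is a subsequence a_{i_1}, a_{i_2}, ... such that FP̂(a_{i_1}, a_{i_2}, ...) is monochromatic. -/

import Mathlib

/-- `FPhat a` is the set of all products `a i₁ * a i₂ * ⋯ * a i_m` over finite
nonempty sequences of pairwise distinct indices (in any order). -/
def FPhat {S : Type*} [Semigroup S] (a : ℕ → S) : Set S :=
  {x | ∃ (i : ℕ) (l : List ℕ), (i :: l).Nodup ∧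
    x = (l.map a).foldl (· * ·) (a i)}

private lemma foldl_mul_eq {G : Type*} [Monoid G] :
    ∀ (l : List G) (x : G), l.foldl (· * ·) x = x * l.prod
  | [], x => by simp
  | y :: t, x => by
    simp only [List.foldl_cons, List.prod_cons]
    rw [foldl_mul_eq t (x * y), mul_assoc]

private lemma prod_mem_FPhat {G : Type*} [Group G] (a : ℕ → G) {l : List ℕ}
    (hne : l ≠ []) (hnd : l.Nodup) : (l.map a).prod ∈ FPhat a := by
  cases l with
  | nil => simp at hne
  | cons i t =>
    exact ⟨i, t, hnd, by simp [foldl_mul_eq, List.prod_cons]⟩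

/-- all products (including the empty one) over nodup lists with entries in `F`. -/
private noncomputable def prodsList {G : Type*} [Monoid G] (a : ℕ → G) (F : Finset ℕ) : List G :=
  (F.toList.sublists.flatMap List.permutations).map (fun l => (l.map a).prod)

private lemma mem_prodsList {G : Type*} [Monoid G] (a : ℕ → G) {F : Finset ℕ} {l : List ℕ}
    (hnd : l.Nodup) (hsub : ∀ i ∈ l, i ∈ F) :
    (l.map a).prod ∈ prodsList a F := by
  have h1 : List.Subperm l F.toList := hnd.subperm (by intro i hi; simpa using hsub i hi)
  obtain ⟨s, hs1, hs2⟩ := h1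
  refine List.mem_map.2 ⟨l, ?_, rfl⟩
  exact List.mem_flatMap.2 ⟨s, List.mem_sublists.2 hs2, List.mem_permutations.2 hs1.symm⟩

/-- If `G` is an infinite finitely colored group and `a₁, a₂, …` are distinct
elements with `FP̂(a₁, a₂, …)` almost-monochromatic, then some subsequence
`a_{i₁}, a_{i₂}, …` has `FP̂(a_{i₁}, a_{i₂}, …)` monochromatic. -/
theorem FPhat_mono_subsequence (G : Type*) [Group G] [Infinite G]
    (C : Type*) [Finite C] (c : G → C) (a : ℕ → G) (hinj : Function.Injective a)
    (hal : ∃ col : C, {x ∈ FPhat a | c x ≠ col}.Finite) :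
    ∃ φ : ℕ → ℕ, StrictMono φ ∧
      ∃ col : C, ∀ x ∈ FPhat (a ∘ φ), c x = col := by
  obtain ⟨col, hfin⟩ := hal
  set B : Set G := {x ∈ FPhat a | c x ≠ col} with hBdef
  have hB : ∀ x ∈ FPhat a, x ∉ B → c x = col := by
    intro x hx hxB
    by_contra h
    exact hxB ⟨hx, h⟩
  -- at every stage we can pick a fresh good index
  have hex : ∀ F : Finset ℕ, ∃ n, (∀ m ∈ F, m < n) ∧
      ∀ p ∈ prodsList a F, ∀ q ∈ prodsList a F, p * a n * q ∉ B := by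
    intro F
    set V : Set G := ⋃ p ∈ {g | g ∈ prodsList a F}, ⋃ q ∈ {g | g ∈ prodsList a F},
        (fun b => p⁻¹ * b * q⁻¹) '' B with hV
    have hVfin : V.Finite := by
      apply Set.Finite.biUnion (List.finite_toSet _)
      intro p _
      apply Set.Finite.biUnion (List.finite_toSet _)
      intro q _
      exact hfin.image _
    have hpre : {n : ℕ | a n ∈ V}.Finite := hVfin.preimage hinj.injOn
    have hbig : ({n : ℕ | a n ∈ V} ∪ ↑F).Finite := hpre.union F.finite_toSet
    obtain ⟨K, hK⟩ := hbig.toFinset.exists_nat_subset_range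
    have hnotin : K ∉ {n : ℕ | a n ∈ V} ∪ ↑F := by
      intro hmem
      have : K ∈ Finset.range K := hK (hbig.mem_toFinset.2 hmem)
      simp at this
    refine ⟨K, ?_, ?_⟩
    · intro m hm
      by_contra hlt
      push_neg at hlt
      have hmm : (m : ℕ) ∈ ({n : ℕ | a n ∈ V} ∪ ↑F) := Or.inr hm
      have : m ∈ Finset.range K := hK (hbig.mem_toFinset.2 hmm)
      rw [Finset.mem_range] at this
      omega
    · intro p hp q hq hmemB
      apply hnotin
      left
      have : a K ∈ V := by
        rw [hV]
        refine Set.mem_biUnion hp (Set.mem_biUnion hq ⟨p * a K * q, hmemB, ?_⟩)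
        group
      exact this
  choose step hlt hgood using hex
  -- the increasing family of chosen index sets
  let F : ℕ → Finset ℕ := fun k => Nat.rec ∅ (fun _ Fk => insert (step Fk) Fk) k
  have hFs : ∀ k, F (k + 1) = insert (step (F k)) (F k) := fun k => rfl
  have hFmono : Monotone F := by
    apply monotone_nat_of_le_succ
    intro k
    rw [hFs]
    exact Finset.subset_insert _ _
  set φ : ℕ → ℕ := fun k => step (F k) with hφ
  have hmem_next : ∀ k, φ k ∈ F (k + 1) := by
    intro k; rw [hFs]; exact Finset.mem_insert_self _ _
  have hsm : StrictMono φ := by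
    apply strictMono_nat_of_lt_succ
    intro k
    exact hlt (F (k + 1)) (φ k) (hmem_next k)
  -- key invariant
  have key : ∀ k, ∀ l : List ℕ, l.Nodup → (∀ i ∈ l, i ∈ F k) → l ≠ [] →
      (l.map a).prod ∉ B := by
    intro k
    induction k with
    | zero =>
      intro l hnd hsub hne
      cases l with
      | nil => exact absurd rfl hne
      | cons i t => exact absurd (hsub i List.mem_cons_self) (by simp [F])
    | succ k ih =>
      intro l hnd hsub hne
      by_cases hmem : step (F k) ∈ l
      · obtain ⟨p, q, rfl⟩ := List.append_of_mem hmem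
        have hndp : p.Nodup := hnd.of_append_left
        have hndnq : (step (F k) :: q).Nodup := hnd.of_append_right
        have hndq : q.Nodup := hndnq.of_cons
        have hnq : step (F k) ∉ q := by
          intro h; exact (List.nodup_cons.1 hndnq).1 h
        have hnp : step (F k) ∉ p := by
          intro h
          have := List.disjoint_of_nodup_append hnd
          exact this h List.mem_cons_self
        have hpF : ∀ i ∈ p, i ∈ F k := by
          intro i hi
          have h1 := hsub i (List.mem_append_left _ hi)
          rw [hFs] at h1
          rcases Finset.mem_insert.1 h1 with h | h
          · subst h; exact absurd hi hnp
          · exact h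
        have hqF : ∀ i ∈ q, i ∈ F k := by
          intro i hi
          have h1 := hsub i (List.mem_append_right _ (List.mem_cons_of_mem _ hi))
          rw [hFs] at h1
          rcases Finset.mem_insert.1 h1 with h | h
          · subst h; exact absurd hi hnq
          · exact h
        have hprod : ((p ++ step (F k) :: q).map a).prod
            = (p.map a).prod * a (step (F k)) * (q.map a).prod := by
          simp [List.prod_append, List.prod_cons, mul_assoc]
        rw [hprod]
        exact hgood (F k) _ (mem_prodsList a hndp hpF) _ (mem_prodsList a hndq hqF)
      · apply ih l hnd _ hne
        intro i hi
        have h1 := hsub i hi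
        rw [hFs] at h1
        rcases Finset.mem_insert.1 h1 with h | h
        · subst h; exact absurd hi hmem
        · exact h
  refine ⟨φ, hsm, col, ?_⟩
  rintro x ⟨i, l, hnd, rfl⟩
  have hndφ : ((i :: l).map φ).Nodup := hnd.map hsm.injective
  have hx : (l.map (a ∘ φ)).foldl (· * ·) ((a ∘ φ) i) = (((i :: l).map φ).map a).prod := by
    rw [foldl_mul_eq]
    simp [List.map_map, List.prod_cons]
  rw [hx]
  obtain ⟨K, hK⟩ := (i :: l).toFinset.exists_nat_subset_range
  have hsubF : ∀ j ∈ (i :: l).map φ, j ∈ F K := by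
    intro j hj
    obtain ⟨m, hm, rfl⟩ := List.mem_map.1 hj
    have hmK : m < K := by
      have := hK (List.mem_toFinset.2 hm)
      simpa using this
    exact hFmono hmK (hmem_next m)
  have hne : (i :: l).map φ ≠ [] := by simp
  exact hB _ (prod_mem_FPhat a hne hndφ) (key K _ hndφ hsubF hne)
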